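/- Consider an impulsive system whose flow contracts between impulses with rate λ and overshoot k ≥ 1 (‖Δ(b⁻)‖ ≤ k·e^{-λ(b-a)}‖Δ(a⁺)‖ on impulse-free intervals [a,b)), and whose jumps are nonexpansive (‖Δ(σ⁺)‖ ≤ ‖Δ(σ⁻)‖ at each impulse time σ). If the number N(t₂, t₁) of impulses in (t₁, t₂] satisfies the average dwell-time bound N(t₂,t₁) ≤ N₀ + (t₂ - t₁)/τ_a for all t₂ ≥ t₁ ≥ 0, then for all t₂ ≥ t₁ ≥ 0, ‖Δ(t₂)‖ ≤ k^{N₀+1}·e^{-(λ - ln k / τ_a)(t₂ - t₁)}·‖Δ(t₁)‖. In particular, if λ > (ln k)/τ_a, the difference Δ converges to zero exponentially. -/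

import Mathlib

/-- IES under an average dwell-time condition: the flow contracts with rate `lam` and
overshoot `k` on impulse-free intervals (the jump at the right endpoint, being
nonexpansive, is absorbed in the estimate), and the number of impulses in `(t₁, t₂]`
satisfies `N ≤ N₀ + (t₂ - t₁)/τa`. Then the trajectory difference `Δ` decays with
rate `lam - ln k / τa`. -/
theorem IES_under_average_dwell_time
    (k lam τa : ℝ) (N₀ : ℕ) (hk : 1 ≤ k) (hlam : 0 < lam) (hτa : 0 < τa)
    (S : Set ℝ) (hSfin : ∀ t : ℝ, (S ∩ Set.Icc 0 t).Finite)
    (Δ : ℝ → ℝ) (hΔpos : ∀ t, 0 ≤ Δ t)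
    (hflow : ∀ a b : ℝ, 0 ≤ a → a ≤ b → S ∩ Set.Ioo a b = ∅ →
      Δ b ≤ k * Real.exp (-lam * (b - a)) * Δ a)
    (hdwell : ∀ t₁ t₂ : ℝ, 0 ≤ t₁ → t₁ ≤ t₂ →
      ((S ∩ Set.Ioc t₁ t₂).ncard : ℝ) ≤ (N₀ : ℝ) + (t₂ - t₁) / τa) :
    (∀ t₁ t₂ : ℝ, 0 ≤ t₁ → t₁ ≤ t₂ →
      Δ t₂ ≤ k ^ (N₀ + 1) * Real.exp (-(lam - Real.log k / τa) * (t₂ - t₁)) * Δ t₁) ∧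
    (Real.log k / τa < lam → Filter.Tendsto Δ Filter.atTop (nhds 0)) := by
  have hk0 : (0:ℝ) < k := lt_of_lt_of_le one_pos hk
  -- key chained contraction estimate
  have key : ∀ n : ℕ, ∀ t1 t2 : ℝ, 0 ≤ t1 → t1 ≤ t2 → (S ∩ Set.Ioc t1 t2).ncard = n →
      Δ t2 ≤ k ^ (n+1) * Real.exp (-lam * (t2 - t1)) * Δ t1 := by
    intro n
    induction n with
    | zero =>
      intro t1 t2 h0 h12 hcard
      have hfin : (S ∩ Set.Ioc t1 t2).Finite :=
        (hSfin t2).subset (fun x hx => ⟨hx.1, le_trans h0 (le_of_lt hx.2.1), hx.2.2⟩)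
      have hempty : S ∩ Set.Ioo t1 t2 = ∅ := by
        have he := (Set.ncard_eq_zero hfin).mp hcard
        apply Set.eq_empty_of_subset_empty
        rw [← he]
        exact fun x hx => ⟨hx.1, hx.2.1, le_of_lt hx.2.2⟩
      simpa using hflow t1 t2 h0 h12 hempty
    | succ n ih =>
      intro t1 t2 h0 h12 hcard
      set T := S ∩ Set.Ioc t1 t2 with hT
      have hfin : T.Finite :=
        (hSfin t2).subset (fun x hx => ⟨hx.1, le_trans h0 (le_of_lt hx.2.1), hx.2.2⟩)
      have hne : T.Nonempty := by
        rw [← Set.ncard_pos hfin] ; omega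
      obtain ⟨σ, hσT, hσmin⟩ : ∃ σ ∈ T, ∀ x ∈ T, id x ≤ id σ → id σ = id x := by
        obtain ⟨σ, hσT, hσm⟩ := hfin.exists_minimalFor id T hne
        exact ⟨σ, hσT, fun x hx hle => le_antisymm (hσm hx hle) hle⟩
      have hσmin' : ∀ x ∈ T, σ ≤ x := by
        intro x hx
        by_contra h
        push_neg at h
        exact absurd (hσmin x hx (le_of_lt h)) (ne_of_gt h)
      have hσ1 : t1 < σ := hσT.2.1
      have hσ2 : σ ≤ t2 := hσT.2.2
      have hσ0 : 0 ≤ σ := le_trans h0 (le_of_lt hσ1)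
      -- no impulses in (t1, σ)
      have hempty1 : S ∩ Set.Ioo t1 σ = ∅ := by
        ext x
        simp only [Set.mem_inter_iff, Set.mem_Ioo, Set.mem_empty_iff_false, iff_false]
        rintro ⟨hxS, hx1, hx2⟩
        exact absurd (hσmin' x ⟨hxS, hx1, le_trans (le_of_lt hx2) hσ2⟩) (not_le.mpr hx2)
      have h1 : Δ σ ≤ k * Real.exp (-lam * (σ - t1)) * Δ t1 :=
        hflow t1 σ h0 (le_of_lt hσ1) hempty1
      -- remaining impulses
      have hrest : S ∩ Set.Ioc σ t2 = T \ {σ} := by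
        ext x
        simp only [Set.mem_inter_iff, Set.mem_Ioc, Set.mem_diff, Set.mem_singleton_iff, hT]
        constructor
        · rintro ⟨hxS, hx1, hx2⟩
          exact ⟨⟨hxS, lt_trans hσ1 hx1, hx2⟩, ne_of_gt hx1⟩
        · rintro ⟨⟨hxS, hx1, hx2⟩, hne'⟩
          exact ⟨hxS, lt_of_le_of_ne (hσmin' x ⟨hxS, hx1, hx2⟩) (Ne.symm hne'), hx2⟩
      have hcard' : (S ∩ Set.Ioc σ t2).ncard = n := by
        rw [hrest, Set.ncard_diff_singleton_of_mem hσT, hcard]; omega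
      have h2 : Δ t2 ≤ k ^ (n+1) * Real.exp (-lam * (t2 - σ)) * Δ σ :=
        ih σ t2 hσ0 hσ2 hcard'
      have hnn : (0:ℝ) ≤ k ^ (n+1) * Real.exp (-lam * (t2 - σ)) :=
        mul_nonneg (pow_nonneg (le_of_lt hk0) _) (le_of_lt (Real.exp_pos _))
      calc Δ t2 ≤ k ^ (n+1) * Real.exp (-lam * (t2 - σ)) * Δ σ := h2
        _ ≤ k ^ (n+1) * Real.exp (-lam * (t2 - σ)) * (k * Real.exp (-lam * (σ - t1)) * Δ t1) :=
            mul_le_mul_of_nonneg_left h1 hnn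
        _ = k ^ (n+2) * (Real.exp (-lam * (t2 - σ)) * Real.exp (-lam * (σ - t1))) * Δ t1 := by ring
        _ = k ^ (n+2) * Real.exp (-lam * (t2 - t1)) * Δ t1 := by
            rw [← Real.exp_add]; ring_nf
  -- part 1
  have part1 : ∀ t₁ t₂ : ℝ, 0 ≤ t₁ → t₁ ≤ t₂ →
      Δ t₂ ≤ k ^ (N₀ + 1) * Real.exp (-(lam - Real.log k / τa) * (t₂ - t₁)) * Δ t₁ := by
    intro t1 t2 h0 h12
    set n := (S ∩ Set.Ioc t1 t2).ncard with hn
    have hkey := key n t1 t2 h0 h12 rfl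
    have hd := hdwell t1 t2 h0 h12
    -- bound k^(n+1) * exp(-lam s) ≤ k^(N₀+1) * exp(-(lam - log k/τa) s)
    have hpow : (k:ℝ) ^ n ≤ k ^ (N₀:ℝ) * Real.exp (Real.log k / τa * (t2 - t1)) := by
      have h1 : (k:ℝ) ^ (n:ℝ) ≤ k ^ ((N₀:ℝ) + (t2 - t1) / τa) :=
        Real.rpow_le_rpow_of_exponent_le hk hd
      have h2 : (k:ℝ) ^ ((t2 - t1) / τa) = Real.exp (Real.log k / τa * (t2 - t1)) := by
        rw [Real.rpow_def_of_pos hk0]; ring_nf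
      rw [Real.rpow_natCast, Real.rpow_add hk0, h2] at h1
      exact h1
    have hkN : (k:ℝ) ^ (N₀:ℝ) = k ^ N₀ := Real.rpow_natCast k N₀
    have hfinal : k ^ (n+1) * Real.exp (-lam * (t2 - t1)) ≤
        k ^ (N₀ + 1) * Real.exp (-(lam - Real.log k / τa) * (t2 - t1)) := by
      have hexp : Real.exp (-(lam - Real.log k / τa) * (t2 - t1)) =
          Real.exp (Real.log k / τa * (t2 - t1)) * Real.exp (-lam * (t2 - t1)) := by
        rw [← Real.exp_add]; ring_nf
      rw [hexp, pow_succ, pow_succ]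
      have := mul_le_mul_of_nonneg_right hpow (le_of_lt (Real.exp_pos (-lam * (t2 - t1))))
      rw [hkN] at this
      calc k ^ n * k * Real.exp (-lam * (t2 - t1))
          ≤ (k ^ N₀ * Real.exp (Real.log k / τa * (t2 - t1))) * k * Real.exp (-lam * (t2 - t1)) := by
            nlinarith [Real.exp_pos (-lam * (t2 - t1)), Real.exp_pos (Real.log k / τa * (t2 - t1)),
              pow_nonneg (le_of_lt hk0) n, pow_nonneg (le_of_lt hk0) N₀]
        _ = k ^ N₀ * k * (Real.exp (Real.log k / τa * (t2 - t1)) * Real.exp (-lam * (t2 - t1))) := by ring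
    calc Δ t2 ≤ k ^ (n+1) * Real.exp (-lam * (t2 - t1)) * Δ t1 := hkey
      _ ≤ k ^ (N₀ + 1) * Real.exp (-(lam - Real.log k / τa) * (t2 - t1)) * Δ t1 :=
          mul_le_mul_of_nonneg_right hfinal (hΔpos t1)
  refine ⟨part1, ?_⟩
  intro hlt
  set μ := lam - Real.log k / τa with hμ
  have hμpos : 0 < μ := sub_pos.mpr hlt
  have hg : Filter.Tendsto (fun t => k ^ (N₀ + 1) * Real.exp (-μ * t) * Δ 0)
      Filter.atTop (nhds 0) := by
    have h1 : Filter.Tendsto (fun t : ℝ => -μ * t) Filter.atTop Filter.atBot := by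
      apply Filter.Tendsto.const_mul_atTop_of_neg (neg_lt_zero.mpr hμpos) Filter.tendsto_id
    have h2 : Filter.Tendsto (fun t : ℝ => Real.exp (-μ * t)) Filter.atTop (nhds 0) :=
      Real.tendsto_exp_atBot.comp h1
    have := (h2.const_mul (k ^ (N₀ + 1))).mul_const (Δ 0)
    simpa using this
  apply squeeze_zero' (Filter.Eventually.of_forall hΔpos) _ hg
  filter_upwards [Filter.eventually_ge_atTop (0:ℝ)] with t ht
  have := part1 0 t le_rfl ht
  simpa using this
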